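/- Every quadruple of real four-variate polynomials corresponds to a quaternion polynomial: for any P₀, P₁, P₂, P₃ ∈ ℝ[X₀, X₁, X₂, X₃], the function f : ℍ → ℍ defined by f(x₀ + i·x₁ + j·x₂ + k·x₃) = P₀(x₀,…,x₃) + i·P₁(x₀,…,x₃) + j·P₂(x₀,…,x₃) + k·P₃(x₀,…,x₃) belongs to ℍ₁[X], the smallest subring of the ring of all functions ℍ → ℍ (with pointwise addition and pointwise multiplication) that contains the identity function and all constant functions. -/

import Mathlib

open Quaternion

/-- The quaternion imaginary units `i`, `j`, `k`. -/
def qi : ℍ[ℝ] := ⟨0, 1, 0, 0⟩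
def qj : ℍ[ℝ] := ⟨0, 0, 1, 0⟩
def qk : ℍ[ℝ] := ⟨0, 0, 0, 1⟩

/-- `ℍ₁[X]`: the smallest subring of the ring of all functions `ℍ → ℍ` (with pointwise
operations) containing the identity mapping and all constant mappings. -/
def H1 : Subring (ℍ[ℝ] → ℍ[ℝ]) :=
  Subring.closure ({id} ∪ { f | ∃ a : ℍ[ℝ], f = Function.const ℍ[ℝ] a })

/-- Every quadruple of real four-variate polynomials corresponds to a quaternion
polynomial: the function sending `x = x₀ + i x₁ + j x₂ + k x₃` to
`P₀(x₀,…,x₃) + i P₁(x₀,…,x₃) + j P₂(x₀,…,x₃) + k P₃(x₀,…,x₃)` lies in `ℍ₁[X]`. -/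
noncomputable def q4 : ℍ[ℝ] := ⟨4⁻¹, 0, 0, 0⟩

lemma const_mem_H1 (a : ℍ[ℝ]) : Function.const ℍ[ℝ] a ∈ H1 :=
  Subring.subset_closure (Or.inr ⟨a, rfl⟩)

lemma id_mem_H1 : (id : ℍ[ℝ] → ℍ[ℝ]) ∈ H1 :=
  Subring.subset_closure (Or.inl rfl)

lemma conj_mem_H1 (c : ℍ[ℝ]) : (fun x : ℍ[ℝ] => c * x * c) ∈ H1 := by
  have : (fun x : ℍ[ℝ] => c * x * c)
      = Function.const ℍ[ℝ] c * id * Function.const ℍ[ℝ] c := rfl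
  rw [this]
  exact H1.mul_mem (H1.mul_mem (const_mem_H1 c) id_mem_H1) (const_mem_H1 c)

lemma re_mem_H1 : (fun x : ℍ[ℝ] => ((x.re : ℝ) : ℍ[ℝ])) ∈ H1 := by
  have h : (fun x : ℍ[ℝ] => ((x.re : ℝ) : ℍ[ℝ]))
      = Function.const ℍ[ℝ] q4 *
        (id - (fun x => qi * x * qi) - (fun x => qj * x * qj) - (fun x => qk * x * qk)) := by
    funext x
    show _ = q4 * (x - qi * x * qi - qj * x * qj - qk * x * qk)
    ext <;> simp [Quaternion.re_mul, Quaternion.imI_mul, Quaternion.imJ_mul, Quaternion.imK_mul] <;> simp [qi, qj, qk, q4] <;> ring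
  rw [h]
  exact H1.mul_mem (const_mem_H1 _)
    (H1.sub_mem (H1.sub_mem (H1.sub_mem id_mem_H1 (conj_mem_H1 qi)) (conj_mem_H1 qj))
      (conj_mem_H1 qk))

lemma imI_mem_H1 : (fun x : ℍ[ℝ] => ((x.imI : ℝ) : ℍ[ℝ])) ∈ H1 := by
  have h : (fun x : ℍ[ℝ] => ((x.imI : ℝ) : ℍ[ℝ]))
      = Function.const ℍ[ℝ] ((-⟨4⁻¹,0,0,0⟩ : ℍ[ℝ]) * qi) *
        (id - (fun x => qi * x * qi) + (fun x => qj * x * qj) + (fun x => qk * x * qk)) := by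
    funext x
    show _ = ((-q4) * qi) * (x - qi * x * qi + qj * x * qj + qk * x * qk)
    ext <;> simp [Quaternion.re_mul, Quaternion.imI_mul, Quaternion.imJ_mul, Quaternion.imK_mul] <;> simp [qi, qj, qk, q4] <;> ring
  rw [h]
  exact H1.mul_mem (const_mem_H1 _)
    (H1.add_mem (H1.add_mem (H1.sub_mem id_mem_H1 (conj_mem_H1 qi)) (conj_mem_H1 qj))
      (conj_mem_H1 qk))

lemma imJ_mem_H1 : (fun x : ℍ[ℝ] => ((x.imJ : ℝ) : ℍ[ℝ])) ∈ H1 := by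
  have h : (fun x : ℍ[ℝ] => ((x.imJ : ℝ) : ℍ[ℝ]))
      = Function.const ℍ[ℝ] ((-⟨4⁻¹,0,0,0⟩ : ℍ[ℝ]) * qj) *
        (id + (fun x => qi * x * qi) - (fun x => qj * x * qj) + (fun x => qk * x * qk)) := by
    funext x
    show _ = ((-q4) * qj) * (x + qi * x * qi - qj * x * qj + qk * x * qk)
    ext <;> simp [Quaternion.re_mul, Quaternion.imI_mul, Quaternion.imJ_mul, Quaternion.imK_mul] <;> simp [qi, qj, qk, q4] <;> ring
  rw [h]
  exact H1.mul_mem (const_mem_H1 _)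
    (H1.add_mem (H1.sub_mem (H1.add_mem id_mem_H1 (conj_mem_H1 qi)) (conj_mem_H1 qj))
      (conj_mem_H1 qk))

lemma imK_mem_H1 : (fun x : ℍ[ℝ] => ((x.imK : ℝ) : ℍ[ℝ])) ∈ H1 := by
  have h : (fun x : ℍ[ℝ] => ((x.imK : ℝ) : ℍ[ℝ]))
      = Function.const ℍ[ℝ] ((-⟨4⁻¹,0,0,0⟩ : ℍ[ℝ]) * qk) *
        (id + (fun x => qi * x * qi) + (fun x => qj * x * qj) - (fun x => qk * x * qk)) := by
    funext x
    show _ = ((-q4) * qk) * (x + qi * x * qi + qj * x * qj - qk * x * qk)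
    ext <;> simp [Quaternion.re_mul, Quaternion.imI_mul, Quaternion.imJ_mul, Quaternion.imK_mul] <;> simp [qi, qj, qk, q4] <;> ring
  rw [h]
  exact H1.mul_mem (const_mem_H1 _)
    (H1.sub_mem (H1.add_mem (H1.add_mem id_mem_H1 (conj_mem_H1 qi)) (conj_mem_H1 qj))
      (conj_mem_H1 qk))

lemma eval_mem_H1 (P : MvPolynomial (Fin 4) ℝ) :
    (fun x : ℍ[ℝ] => ((MvPolynomial.eval ![x.re, x.imI, x.imJ, x.imK] P : ℝ) : ℍ[ℝ])) ∈ H1 := by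
  induction P using MvPolynomial.induction_on with
  | C a =>
    simp only [MvPolynomial.eval_C]; exact const_mem_H1 _
  | add p q hp hq =>
    have h : (fun x : ℍ[ℝ] => ((MvPolynomial.eval ![x.re, x.imI, x.imJ, x.imK] (p + q) : ℝ) : ℍ[ℝ]))
        = (fun x : ℍ[ℝ] => ((MvPolynomial.eval ![x.re, x.imI, x.imJ, x.imK] p : ℝ) : ℍ[ℝ]))
          + (fun x : ℍ[ℝ] => ((MvPolynomial.eval ![x.re, x.imI, x.imJ, x.imK] q : ℝ) : ℍ[ℝ])) := by
      funext x; push_cast [Pi.add_apply, map_add]; ring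
    rw [h]; exact H1.add_mem hp hq
  | mul_X p n hp =>
    have h : (fun x : ℍ[ℝ] => ((MvPolynomial.eval ![x.re, x.imI, x.imJ, x.imK] (p * MvPolynomial.X n) : ℝ) : ℍ[ℝ]))
        = (fun x : ℍ[ℝ] => ((MvPolynomial.eval ![x.re, x.imI, x.imJ, x.imK] p : ℝ) : ℍ[ℝ]))
          * (fun x : ℍ[ℝ] => ((![x.re, x.imI, x.imJ, x.imK] n : ℝ) : ℍ[ℝ])) := by
      funext x; push_cast [Pi.mul_apply, map_mul]; simp
    rw [h]
    refine H1.mul_mem hp ?_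
    fin_cases n <;> simp <;>
      [exact re_mem_H1; exact imI_mem_H1; exact imJ_mem_H1; exact imK_mem_H1]


theorem quadruple_of_polynomials_is_quaternion_polynomial
    (P₀ P₁ P₂ P₃ : MvPolynomial (Fin 4) ℝ) :
    (fun x : ℍ[ℝ] =>
        ((MvPolynomial.eval ![x.re, x.imI, x.imJ, x.imK] P₀ : ℝ) : ℍ[ℝ])
        + qi * ((MvPolynomial.eval ![x.re, x.imI, x.imJ, x.imK] P₁ : ℝ) : ℍ[ℝ])
        + qj * ((MvPolynomial.eval ![x.re, x.imI, x.imJ, x.imK] P₂ : ℝ) : ℍ[ℝ])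
        + qk * ((MvPolynomial.eval ![x.re, x.imI, x.imJ, x.imK] P₃ : ℝ) : ℍ[ℝ]))
      ∈ H1 := by
  exact H1.add_mem (H1.add_mem (H1.add_mem (eval_mem_H1 P₀)
    (H1.mul_mem (const_mem_H1 qi) (eval_mem_H1 P₁)))
    (H1.mul_mem (const_mem_H1 qj) (eval_mem_H1 P₂)))
    (H1.mul_mem (const_mem_H1 qk) (eval_mem_H1 P₃))
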